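/- Let d ≥ 3 and let G = (V, E) be a d-regular finite simple bipartite graph with bipartition (A, B). Let A_1 ⊆ A be such that distinct vertices of A_1 have disjoint neighborhoods, and suppose that every vertex of A ∖ A_1 has at least one neighbor in N(A_1) = ⋃_{a ∈ A_1} N(a). Then A ∖ A_1 is a 4-path vertex cover of G satisfying |A ∖ A_1| ≤ ((d² − d)/(2(d² − d + 1)))·|V| and |A ∖ A_1| ≤ (d²/(d² − d + 1))·ψ_4(G). -/

import Mathlib

open SimpleGraph

/-- `G` contains a path of order `k` (i.e., with `k` vertices). -/
def HasPathOfOrder {V : Type*} (G : SimpleGraph V) (k : ℕ) : Prop :=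
  ∃ (u v : V) (w : G.Walk u v), w.IsPath ∧ w.length + 1 = k

/-- `F` is a `k`-path vertex cover of `G`: the subgraph induced on the
complement of `F` contains no path of order `k`. -/
def IsPathVertexCover {V : Type*} (G : SimpleGraph V) (k : ℕ) (F : Finset V) : Prop :=
  ¬ HasPathOfOrder (G.induce ((↑F : Set V)ᶜ)) k

/-- `psi G k` is the minimum cardinality of a `k`-path vertex cover of `G`. -/
noncomputable def psi {V : Type*} [Fintype V] (G : SimpleGraph V) (k : ℕ) : ℕ :=
  sInf {n | ∃ F : Finset V, IsPathVertexCover G k F ∧ F.card = n}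

section Aux

variable {V : Type*} [Fintype V] [DecidableEq V] (G : SimpleGraph V) [DecidableRel G.Adj]

lemma pairCount (S T : Finset V) :
    (Rel.interedges G.Adj S T).card = ∑ u ∈ S, ((G.neighborFinset u) ∩ T).card := by
  rw [Rel.interedges_eq_biUnion, Finset.card_biUnion]
  · refine Finset.sum_congr rfl fun u _ => ?_
    rw [Finset.card_map]
    congr 1
    ext v
    simp [adj_comm, and_comm]
  · intro x _ y _ hxy
    simp only [Finset.disjoint_left, Finset.mem_map]
    rintro p ⟨a, _, rfl⟩ ⟨b, _, h⟩
    have := congrArg Prod.fst h; simp at this; exact hxy this.symm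

lemma pairCount' (S T : Finset V) :
    (Rel.interedges G.Adj S T).card = ∑ u ∈ T, ((G.neighborFinset u) ∩ S).card := by
  haveI : Std.Symm G.Adj := G.symm
  rw [Rel.card_interedges_comm, pairCount]

lemma nbhCard {d : ℕ} (hreg : G.IsRegularOfDegree d) (x : V) :
    (G.neighborFinset x).card = d := by
  rw [SimpleGraph.card_neighborFinset_eq_degree]; exact hreg x

omit [Fintype V] [DecidableEq V] [DecidableRel G.Adj] in
lemma buildP4 (F : Finset V) (x1 x2 x3 x4 : V)
    (h1 : x1 ∉ F) (h2 : x2 ∉ F) (h3 : x3 ∉ F) (h4 : x4 ∉ F)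
    (a12 : G.Adj x1 x2) (a23 : G.Adj x2 x3) (a34 : G.Adj x3 x4)
    (n13 : x1 ≠ x3) (n14 : x1 ≠ x4) (n24 : x2 ≠ x4) :
    HasPathOfOrder (G.induce ((↑F : Set V)ᶜ)) 4 := by
  refine ⟨⟨x1, by simpa using h1⟩, ⟨x4, by simpa using h4⟩,
    Walk.cons (by simpa using a12) (Walk.cons (u := (⟨x2, by simpa using h2⟩ : ((↑F : Set V)ᶜ : Set V)))
      (by simpa using a23) (Walk.cons (u := (⟨x3, by simpa using h3⟩ : ((↑F : Set V)ᶜ : Set V)))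
      (by simpa using a34) Walk.nil)), ?_, by simp⟩
  simp [Walk.isPath_def, Subtype.ext_iff, a12.ne, a23.ne, a34.ne, n13, n14, n24]

omit [Fintype V] [DecidableEq V] [DecidableRel G.Adj] in
lemma extractP4 {s : Set V} (h : HasPathOfOrder (G.induce s) 4) :
    ∃ x1 x2 x3 x4, x1 ∈ s ∧ x2 ∈ s ∧ x3 ∈ s ∧ x4 ∈ s ∧
      G.Adj x1 x2 ∧ G.Adj x2 x3 ∧ G.Adj x3 x4 ∧ x1 ≠ x3 ∧ x2 ≠ x4 ∧ x1 ≠ x4 := by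
  obtain ⟨u, v, w, hp, hlen⟩ := h
  cases w with
  | nil => simp at hlen
  | cons h1 w2 =>
    cases w2 with
    | nil => simp at hlen
    | cons h2 w3 =>
      cases w3 with
      | nil => simp at hlen
      | cons h3 w4 =>
        cases w4 with
        | cons h4 w5 => simp at hlen
        | nil =>
          rename_i b c
          exact ⟨u, b, c, v, u.2, b.2, c.2, v.2, by simpa using h1, by simpa using h2,
            by simpa using h3, by simp [Walk.isPath_def, Subtype.ext_iff] at hp ⊢; tauto,
            by simp [Walk.isPath_def, Subtype.ext_iff] at hp ⊢; tauto,
            by simp [Walk.isPath_def, Subtype.ext_iff] at hp ⊢; tauto⟩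

lemma cardAB (d : ℕ) (hd : 0 < d) (hreg : G.IsRegularOfDegree d)
    (A B : Finset V) (hdisj : Disjoint A B)
    (hbip : ∀ u v, G.Adj u v → (u ∈ A ∧ v ∈ B) ∨ (u ∈ B ∧ v ∈ A)) :
    A.card = B.card := by
  have hset : Rel.interedges G.Adj A Finset.univ = Rel.interedges G.Adj Finset.univ B := by
    ext ⟨u, v⟩
    simp only [Rel.mem_interedges_iff, Finset.mem_univ, true_and, and_true]
    constructor
    · rintro ⟨hu, huv⟩
      refine ⟨?_, huv⟩
      rcases hbip u v huv with ⟨_, h⟩ | ⟨h, _⟩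
      · exact h
      · exact absurd hu (Finset.disjoint_right.mp hdisj h)
    · rintro ⟨hv, huv⟩
      refine ⟨?_, huv⟩
      rcases hbip u v huv with ⟨h, _⟩ | ⟨_, h⟩
      · exact h
      · exact absurd hv (Finset.disjoint_left.mp hdisj h)
  have h1 : (Rel.interedges G.Adj A Finset.univ).card = d * A.card := by
    rw [pairCount]
    rw [Finset.sum_congr rfl (fun u _ => by rw [Finset.inter_univ, nbhCard G hreg u])]
    rw [Finset.sum_const, smul_eq_mul, mul_comm]
  have h2 : (Rel.interedges G.Adj Finset.univ B).card = d * B.card := by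
    rw [pairCount']
    rw [Finset.sum_congr rfl (fun u _ => by rw [Finset.inter_univ, nbhCard G hreg u])]
    rw [Finset.sum_const, smul_eq_mul, mul_comm]
  exact Nat.eq_of_mul_eq_mul_left hd (by rw [← h1, ← h2, hset])

lemma coverBound (d : ℕ) (hd : 3 ≤ d) (hreg : G.IsRegularOfDegree d)
    (A B : Finset V) (hdisj : Disjoint A B)
    (hbip : ∀ u v, G.Adj u v → (u ∈ A ∧ v ∈ B) ∨ (u ∈ B ∧ v ∈ A))
    (F : Finset V) (hF : IsPathVertexCover G 4 F) :
    (d - 1) * Fintype.card V ≤ 2 * d * F.card := by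
  classical
  set C : Finset V := Finset.univ \ F with hC
  have hmemC : ∀ x, x ∈ C ↔ x ∉ F := by intro x; simp [hC]
  have claim : ∀ u ∈ C, ∀ v ∈ C, G.Adj u v →
      (G.neighborFinset u \ F).card ≤ 1 ∨ (G.neighborFinset v \ F).card ≤ 1 := by
    intro u hu v hv huv
    by_contra hcon
    push_neg at hcon
    obtain ⟨hu2, hv2⟩ := hcon
    have h1 : ((G.neighborFinset u \ F).erase v).Nonempty := by
      rw [← Finset.card_pos]
      have := Finset.pred_card_le_card_erase (s := G.neighborFinset u \ F) (a := v)
      omega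
    have h2 : ((G.neighborFinset v \ F).erase u).Nonempty := by
      rw [← Finset.card_pos]
      have := Finset.pred_card_le_card_erase (s := G.neighborFinset v \ F) (a := u)
      omega
    obtain ⟨u', hu'⟩ := h1
    obtain ⟨v', hv'⟩ := h2
    rw [Finset.mem_erase, Finset.mem_sdiff, SimpleGraph.mem_neighborFinset] at hu' hv'
    obtain ⟨hu'v, hadju, hu'F⟩ := hu'
    obtain ⟨hv'u, hadjv, hv'F⟩ := hv'
    have huF : u ∉ F := (hmemC u).mp hu
    have hvF : v ∉ F := (hmemC v).mp hv
    -- sides, to get u' ≠ v'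
    have hne : u' ≠ v' := by
      rcases hbip u v huv with ⟨huA, hvB⟩ | ⟨huB, hvA⟩
      · have hu'B : u' ∈ B := by
          rcases hbip u u' hadju with ⟨_, h⟩ | ⟨h, _⟩
          · exact h
          · exact absurd huA (Finset.disjoint_right.mp hdisj h)
        have hv'A : v' ∈ A := by
          rcases hbip v v' hadjv with ⟨h, _⟩ | ⟨_, h⟩
          · exact absurd hvB (Finset.disjoint_left.mp hdisj h)
          · exact h
        intro he; exact (Finset.disjoint_left.mp hdisj hv'A) (he ▸ hu'B)
      · have hu'A : u' ∈ A := by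
          rcases hbip u u' hadju with ⟨h, _⟩ | ⟨_, h⟩
          · exact absurd huB (Finset.disjoint_left.mp hdisj h)
          · exact h
        have hv'B : v' ∈ B := by
          rcases hbip v v' hadjv with ⟨_, h⟩ | ⟨h, _⟩
          · exact h
          · exact absurd hvA (Finset.disjoint_right.mp hdisj h)
        intro he; exact (Finset.disjoint_left.mp hdisj hu'A) (he ▸ hv'B)
    exact hF (buildP4 G F u' u v v' hu'F huF hvF hv'F hadju.symm huv hadjv
      hu'v hne (Ne.symm hv'u))
  have hdeg : ∀ x : V, (G.neighborFinset x \ F).card + (G.neighborFinset x ∩ F).card = d := by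
    intro x
    rw [Finset.card_sdiff_add_card_inter]
    exact nbhCard G hreg x
  set D1 : Finset V := C.filter (fun u => (G.neighborFinset u \ F).card ≤ 1) with hD1
  have hD1sub : D1 ⊆ C := Finset.filter_subset _ _
  have hX1 : ∑ u ∈ D1, (G.neighborFinset u \ F).card ≤ D1.card := by
    calc ∑ u ∈ D1, (G.neighborFinset u \ F).card ≤ ∑ _u ∈ D1, 1 :=
          Finset.sum_le_sum (fun u hu => (Finset.mem_filter.mp hu).2)
      _ = D1.card := by simp
  have hX2 : ∑ u ∈ C \ D1, (G.neighborFinset u \ F).card ≤ D1.card := by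
    have step1 : ∀ u ∈ C \ D1, G.neighborFinset u \ F ⊆ G.neighborFinset u ∩ D1 := by
      intro u hu x hx
      have hu' := Finset.mem_sdiff.mp hu
      have hx' := Finset.mem_sdiff.mp hx
      have hxC : x ∈ C := (hmemC x).mpr hx'.2
      have hadj : G.Adj u x := by simpa using hx'.1
      rcases claim u hu'.1 x hxC hadj with h | h
      · exact absurd (Finset.mem_filter.mpr ⟨hu'.1, h⟩) hu'.2
      · exact Finset.mem_inter.mpr ⟨hx'.1, Finset.mem_filter.mpr ⟨hxC, h⟩⟩
    calc ∑ u ∈ C \ D1, (G.neighborFinset u \ F).card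
        ≤ ∑ u ∈ C \ D1, (G.neighborFinset u ∩ D1).card :=
          Finset.sum_le_sum fun u hu => Finset.card_le_card (step1 u hu)
      _ = (Rel.interedges G.Adj (C \ D1) D1).card := (pairCount G _ _).symm
      _ = ∑ v ∈ D1, (G.neighborFinset v ∩ (C \ D1)).card := pairCount' G _ _
      _ ≤ ∑ _v ∈ D1, 1 := Finset.sum_le_sum (fun v hv => by
          have h1 : G.neighborFinset v ∩ (C \ D1) ⊆ G.neighborFinset v \ F := by
            intro x hx
            have hx' := Finset.mem_inter.mp hx
            exact Finset.mem_sdiff.mpr ⟨hx'.1, (hmemC x).mp (Finset.mem_sdiff.mp hx'.2).1⟩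
          exact le_trans (Finset.card_le_card h1) (Finset.mem_filter.mp hv).2)
      _ = D1.card := by simp
  have hX : ∑ u ∈ C, (G.neighborFinset u \ F).card ≤ 2 * D1.card := by
    rw [← Finset.sum_sdiff hD1sub]
    omega
  have hY1 : (d - 1) * D1.card ≤ ∑ u ∈ C, (G.neighborFinset u ∩ F).card := by
    calc (d - 1) * D1.card = ∑ _u ∈ D1, (d - 1) := by rw [Finset.sum_const, smul_eq_mul, mul_comm]
      _ ≤ ∑ u ∈ D1, (G.neighborFinset u ∩ F).card := Finset.sum_le_sum fun u hu => by
          have h1 := hdeg u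
          have h2 := (Finset.mem_filter.mp hu).2
          omega
      _ ≤ ∑ u ∈ C, (G.neighborFinset u ∩ F).card :=
          Finset.sum_le_sum_of_subset hD1sub
  have hY2 : ∑ u ∈ C, (G.neighborFinset u ∩ F).card ≤ d * F.card := by
    calc ∑ u ∈ C, (G.neighborFinset u ∩ F).card
        = (Rel.interedges G.Adj C F).card := (pairCount G C F).symm
      _ = ∑ v ∈ F, (G.neighborFinset v ∩ C).card := pairCount' G C F
      _ ≤ ∑ _v ∈ F, d := Finset.sum_le_sum fun v _ => by
          have h1 : (G.neighborFinset v ∩ C).card ≤ (G.neighborFinset v).card :=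
            Finset.card_le_card Finset.inter_subset_left
          have h2 : (G.neighborFinset v).card = d := nbhCard G hreg v
          omega
      _ = d * F.card := by rw [Finset.sum_const, smul_eq_mul, mul_comm]
  have hXY : ∑ u ∈ C, (G.neighborFinset u \ F).card + ∑ u ∈ C, (G.neighborFinset u ∩ F).card
      = d * C.card := by
    rw [← Finset.sum_add_distrib]
    calc ∑ u ∈ C, ((G.neighborFinset u \ F).card + (G.neighborFinset u ∩ F).card)
        = ∑ _u ∈ C, d := Finset.sum_congr rfl (fun u _ => hdeg u)
      _ = d * C.card := by rw [Finset.sum_const, smul_eq_mul, mul_comm]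
  set X := ∑ u ∈ C, (G.neighborFinset u \ F).card with hXdef
  set Y := ∑ u ∈ C, (G.neighborFinset u ∩ F).card with hYdef
  have key : (d - 1) * C.card ≤ (d + 1) * F.card := by
    have h1 : d * ((d - 1) * C.card) ≤ d * ((d + 1) * F.card) := by
      calc d * ((d - 1) * C.card) = (d - 1) * (d * C.card) := by ring
        _ = (d - 1) * X + (d - 1) * Y := by rw [← hXY]; ring
        _ ≤ (d - 1) * (2 * D1.card) + (d - 1) * Y :=
            Nat.add_le_add_right (Nat.mul_le_mul_left _ hX) _
        _ = 2 * ((d - 1) * D1.card) + (d - 1) * Y := by ring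
        _ ≤ 2 * Y + (d - 1) * Y := by
            have : 2 * ((d - 1) * D1.card) ≤ 2 * Y := Nat.mul_le_mul_left _ hY1
            omega
        _ = (2 + (d - 1)) * Y := by ring
        _ = (d + 1) * Y := by congr 1; omega
        _ ≤ (d + 1) * (d * F.card) := Nat.mul_le_mul_left _ hY2
        _ = d * ((d + 1) * F.card) := by ring
    exact Nat.le_of_mul_le_mul_left h1 (by omega)
  have hCF : C.card + F.card = Fintype.card V := by
    rw [hC, Finset.card_sdiff_of_subset (Finset.subset_univ F)]
    have := Finset.card_le_univ F
    rw [Finset.card_univ] at *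
    omega
  calc (d - 1) * Fintype.card V = (d - 1) * C.card + (d - 1) * F.card := by
        rw [← hCF]; ring
    _ ≤ (d + 1) * F.card + (d - 1) * F.card := Nat.add_le_add_right key _
    _ = ((d + 1) + (d - 1)) * F.card := by ring
    _ = 2 * d * F.card := by congr 1; omega

end Aux

/-- Algorithm `Approx3` on `d`-regular bipartite graphs (`d ≥ 3`): if the
vertices of `A₁ ⊆ A` have pairwise disjoint neighborhoods and every vertex of
`A ∖ A₁` has a neighbor in `N(A₁)`, then `A ∖ A₁` is a `4`-path vertex cover
of `G` with `|A ∖ A₁| ≤ ((d²-d)/(2(d²-d+1)))·|V|` and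
`|A ∖ A₁| ≤ (d²/(d²-d+1))·ψ₄(G)`. -/
theorem stmt_18 {V : Type*} [Fintype V] [DecidableEq V] (G : SimpleGraph V)
    [DecidableRel G.Adj]
    (d : ℕ) (hd : 3 ≤ d) (hreg : G.IsRegularOfDegree d)
    (A B : Finset V) (hpart : A ∪ B = Finset.univ) (hdisj : Disjoint A B)
    (hbip : ∀ u v, G.Adj u v → (u ∈ A ∧ v ∈ B) ∨ (u ∈ B ∧ v ∈ A))
    (A1 : Finset V) (hA1 : A1 ⊆ A)
    (hnbr : ∀ a ∈ A1, ∀ a' ∈ A1, a ≠ a' → ∀ b, G.Adj a b → ¬G.Adj a' b)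
    (hdom : ∀ v ∈ A \ A1, ∃ w, G.Adj v w ∧ ∃ a ∈ A1, G.Adj a w) :
    IsPathVertexCover G 4 (A \ A1) ∧
      2 * (d ^ 2 - d + 1) * (A \ A1).card ≤ (d ^ 2 - d) * Fintype.card V ∧
      (d ^ 2 - d + 1) * (A \ A1).card ≤ d ^ 2 * psi G 4 := by
  classical
  -- Part 1: the cover property
  have hcover : IsPathVertexCover G 4 (A \ A1) := by
    intro hpath
    obtain ⟨x1, x2, x3, x4, m1, m2, m3, m4, a12, a23, a34, n13, n24, n14⟩ := extractP4 G hpath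
    have hAmem : ∀ x : V, x ∈ ((↑(A \ A1) : Set V)ᶜ) → x ∈ A → x ∈ A1 := by
      intro x hx hxA
      by_contra h
      exact hx (by simp [hxA, h])
    rcases hbip x1 x2 a12 with ⟨h1A, h2B⟩ | ⟨h1B, h2A⟩
    · -- x1 ∈ A, x2 ∈ B, x3 ∈ A, x2 adjacent to x1 and x3
      have h3A : x3 ∈ A := by
        rcases hbip x2 x3 a23 with ⟨h, _⟩ | ⟨_, h⟩
        · exact absurd h2B (Finset.disjoint_left.mp hdisj h)
        · exact h
      exact hnbr x1 (hAmem x1 m1 h1A) x3 (hAmem x3 m3 h3A) n13 x2 a12 a23.symm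
    · -- x2 ∈ A, x4 ∈ A, x3 ∈ B adjacent to both
      have h3B : x3 ∈ B := by
        rcases hbip x2 x3 a23 with ⟨_, h⟩ | ⟨h, _⟩
        · exact h
        · exact absurd h2A (Finset.disjoint_right.mp hdisj h)
      have h4A : x4 ∈ A := by
        rcases hbip x3 x4 a34 with ⟨h, _⟩ | ⟨_, h⟩
        · exact absurd h3B (Finset.disjoint_left.mp hdisj h)
        · exact h
      exact hnbr x2 (hAmem x2 m2 h2A) x4 (hAmem x4 m4 h4A) n24 x3 a23 a34.symm
  -- counting: |A \ A1| ≤ d*(d-1)*|A1|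
  set N1 : Finset V := A1.biUnion (fun a => G.neighborFinset a) with hN1def
  have hN1card : N1.card = d * A1.card := by
    rw [hN1def, Finset.card_biUnion]
    · calc ∑ a ∈ A1, (G.neighborFinset a).card = ∑ _a ∈ A1, d :=
            Finset.sum_congr rfl (fun a _ => nbhCard G hreg a)
        _ = d * A1.card := by rw [Finset.sum_const, smul_eq_mul, mul_comm]
    · intro a ha b hb hab
      rw [Function.onFun, Finset.disjoint_left]
      intro x hxa hxb
      exact hnbr a ha b hb hab x (by simpa using hxa) (by simpa using hxb)
  have hlow : (A \ A1).card ≤ (Rel.interedges G.Adj (A \ A1) N1).card := by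
    rw [pairCount]
    calc (A \ A1).card = ∑ _v ∈ A \ A1, 1 := by simp
      _ ≤ ∑ v ∈ A \ A1, (G.neighborFinset v ∩ N1).card := Finset.sum_le_sum fun v hv => by
          obtain ⟨w, hvw, a, ha, haw⟩ := hdom v hv
          have hw : w ∈ G.neighborFinset v ∩ N1 := by
            rw [Finset.mem_inter, hN1def, Finset.mem_biUnion]
            exact ⟨by simpa using hvw, a, ha, by simpa using haw⟩
          exact Finset.card_pos.mpr ⟨w, hw⟩
  have hup : (Rel.interedges G.Adj (A \ A1) N1).card ≤ (d - 1) * N1.card := by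
    rw [pairCount']
    calc ∑ w ∈ N1, (G.neighborFinset w ∩ (A \ A1)).card ≤ ∑ _w ∈ N1, (d - 1) :=
          Finset.sum_le_sum fun w hw => by
            obtain ⟨a, ha, haw⟩ := Finset.mem_biUnion.mp (hN1def ▸ hw)
            have haw' : G.Adj a w := by simpa using haw
            have hsub : G.neighborFinset w ∩ (A \ A1) ⊆ (G.neighborFinset w).erase a := by
              intro x hx
              have hx' := Finset.mem_inter.mp hx
              refine Finset.mem_erase.mpr ⟨?_, hx'.1⟩
              intro he
              exact (Finset.mem_sdiff.mp hx'.2).2 (he ▸ ha)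
            calc (G.neighborFinset w ∩ (A \ A1)).card
                ≤ ((G.neighborFinset w).erase a).card := Finset.card_le_card hsub
              _ = (G.neighborFinset w).card - 1 :=
                  Finset.card_erase_of_mem (by simpa using haw'.symm)
              _ = d - 1 := by rw [nbhCard G hreg w]
      _ = (d - 1) * N1.card := by rw [Finset.sum_const, smul_eq_mul, mul_comm]
  have hmain : (A \ A1).card ≤ d * (d - 1) * A1.card := by
    calc (A \ A1).card ≤ (d - 1) * N1.card := hlow.trans hup
      _ = d * (d - 1) * A1.card := by rw [hN1card]; ring
  -- arithmetic facts
  have hdd : d ^ 2 - d = d * (d - 1) := by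
    rw [Nat.mul_sub_one, pow_two]
  have hcards : A1.card + (A \ A1).card = A.card := by
    have h1 := Finset.card_sdiff_of_subset hA1
    have h2 := Finset.card_le_card hA1
    omega
  have key : (d ^ 2 - d + 1) * (A \ A1).card ≤ (d ^ 2 - d) * A.card := by
    rw [hdd]
    calc (d * (d - 1) + 1) * (A \ A1).card
        = d * (d - 1) * (A \ A1).card + (A \ A1).card := by ring
      _ ≤ d * (d - 1) * (A \ A1).card + d * (d - 1) * A1.card :=
          Nat.add_le_add_left hmain _
      _ = d * (d - 1) * (A1.card + (A \ A1).card) := by ring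
      _ = d * (d - 1) * A.card := by rw [hcards]
  have hAeqB : A.card = B.card := cardAB G d (by omega) hreg A B hdisj hbip
  have hn : Fintype.card V = 2 * A.card := by
    rw [← Finset.card_univ, ← hpart, Finset.card_union_of_disjoint hdisj]
    omega
  refine ⟨hcover, ?_, ?_⟩
  · -- Part 2
    calc 2 * (d ^ 2 - d + 1) * (A \ A1).card
        = 2 * ((d ^ 2 - d + 1) * (A \ A1).card) := by ring
      _ ≤ 2 * ((d ^ 2 - d) * A.card) := Nat.mul_le_mul_left _ key
      _ = (d ^ 2 - d) * (2 * A.card) := by ring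
      _ = (d ^ 2 - d) * Fintype.card V := by rw [hn]
  · -- Part 3
    obtain ⟨F0, hF0cov, hF0card⟩ : ∃ F : Finset V, IsPathVertexCover G 4 F ∧ F.card = psi G 4 := by
      have hne : (Finset.univ : Finset V).card ∈
          {n | ∃ F : Finset V, IsPathVertexCover G 4 F ∧ F.card = n} := by
        refine ⟨Finset.univ, ?_, rfl⟩
        rintro ⟨u, v, w, hp, hlen⟩
        exact absurd u.2 (by simp)
      exact Nat.sInf_mem ⟨_, hne⟩
    have hcb := coverBound G d hd hreg A B hdisj hbip F0 hF0cov
    rw [hF0card, hn] at hcb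
    have hstep : (d - 1) * A.card ≤ d * psi G 4 := by
      have h1 : 2 * ((d - 1) * A.card) ≤ 2 * (d * psi G 4) := by
        calc 2 * ((d - 1) * A.card) = (d - 1) * (2 * A.card) := by ring
          _ ≤ 2 * d * psi G 4 := hcb
          _ = 2 * (d * psi G 4) := by ring
      omega
    calc (d ^ 2 - d + 1) * (A \ A1).card ≤ (d ^ 2 - d) * A.card := key
      _ = d * ((d - 1) * A.card) := by rw [hdd]; ring
      _ ≤ d * (d * psi G 4) := Nat.mul_le_mul_left _ hstep
      _ = d ^ 2 * psi G 4 := by ring
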